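/- Let (s₁, s₂) ∈ ℂ² be nonzero. For t ∈ ℝ let w(t) = (1, t s₁, t² s₁²/2, t s₂ + t³ s₁³/6) ∈ ℂ⁴. Then in the projectivization ℙ(ℂ⁴), the point [w(t)] tends to [0 : 0 : 0 : 1] as t → +∞. (This shows that for the additive action (s₁,s₂)∘[z₀:z₁:z₂:z₃] = [z₀ : z₁+s₁z₀ : z₂+s₁z₁+ (s₁²/2)z₀ : z₃+s₁z₂+(s₁²/2)z₁+(s₂+s₁³/6)z₀] on the quadric {2z₀z₂ = z₁²} ⊆ ℙ³, the limit lim_{t→∞} tv∘x₀ with x₀ = [1:0:0:0] equals [0:0:0:1] for every nonzero v ∈ ℂ², so this additive action does not satisfy the OP-condition.) -/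

import Mathlib

open Filter

/-- The quotient topology on the projectivization of a topological vector space. -/
instance projectivizationTopology (K V : Type*) [DivisionRing K] [AddCommGroup V]
    [Module K V] [TopologicalSpace V] : TopologicalSpace (Projectivization K V) :=
  inferInstanceAs (TopologicalSpace (Quotient (projectivizationSetoid K V)))

private lemma aux_tendsto_cdiv (c : ℂ) (k : ℕ) (hk : 1 ≤ k) :
    Tendsto (fun t : ℝ => c / (t : ℂ) ^ k) atTop (nhds 0) := by
  have h1 : Tendsto (fun t : ℝ => (t ^ k)⁻¹) atTop (nhds 0) :=
    (tendsto_pow_atTop (by omega : k ≠ 0)).inv_tendsto_atTop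
  have h2 : Tendsto (fun t : ℝ => (((t ^ k)⁻¹ : ℝ) : ℂ)) atTop (nhds ((0 : ℝ) : ℂ)) :=
    (Complex.continuous_ofReal.tendsto 0).comp h1
  have h3 := h2.const_mul c
  rw [Complex.ofReal_zero, mul_zero] at h3
  refine h3.congr fun t => ?_
  push_cast
  rw [div_eq_mul_inv]

private lemma cont_mk : Continuous (fun v : {v : ℂ × ℂ × ℂ × ℂ // v ≠ 0} =>
    Projectivization.mk ℂ v.1 v.2) := continuous_quotient_mk'

theorem tendsto_degenerate_quadric_one_param_to_fixed_point
    (s : ℂ × ℂ) (hs : s ≠ 0) :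
    Tendsto
      (fun t : ℝ => Projectivization.mk ℂ
        (((1 : ℂ), (t : ℂ) * s.1, (t : ℂ) ^ 2 * s.1 ^ 2 / 2,
          (t : ℂ) * s.2 + (t : ℂ) ^ 3 * s.1 ^ 3 / 6) : ℂ × ℂ × ℂ × ℂ)
        (by simp [Prod.ext_iff]))
      atTop
      (nhds (Projectivization.mk ℂ (((0 : ℂ), (0 : ℂ), (0 : ℂ), (1 : ℂ)) : ℂ × ℂ × ℂ × ℂ)
        (by simp [Prod.ext_iff]))) := by
  have h01 : (((0 : ℂ), (0 : ℂ), (0 : ℂ), (1 : ℂ)) : ℂ × ℂ × ℂ × ℂ) ≠ 0 := by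
    simp [Prod.ext_iff]
  by_cases h1 : s.1 = 0
  · -- s₁ = 0, s₂ ≠ 0
    have h2 : s.2 ≠ 0 := by
      intro h2; exact hs (Prod.ext h1 h2)
    set u : ℝ → ℂ × ℂ × ℂ × ℂ :=
      fun t => (s.2⁻¹ / (t : ℂ), 0, 0, 1) with hu_def
    have hu : ∀ t, u t ≠ 0 := by
      intro t h
      simp [hu_def, Prod.ext_iff] at h
    have htend : Tendsto u atTop (nhds ((0 : ℂ), (0 : ℂ), (0 : ℂ), (1 : ℂ))) := by
      refine Tendsto.prodMk_nhds ?_ (Tendsto.prodMk_nhds tendsto_const_nhds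
        (Tendsto.prodMk_nhds tendsto_const_nhds tendsto_const_nhds))
      simpa using aux_tendsto_cdiv s.2⁻¹ 1 le_rfl
    have hsub : Tendsto (fun t => (⟨u t, hu t⟩ : {v : ℂ × ℂ × ℂ × ℂ // v ≠ 0}))
        atTop (nhds ⟨((0 : ℂ), (0 : ℂ), (0 : ℂ), (1 : ℂ)), h01⟩) :=
      tendsto_subtype_rng.mpr htend
    have hmain : Tendsto (fun t => Projectivization.mk ℂ (u t) (hu t)) atTop
        (nhds (Projectivization.mk ℂ (((0 : ℂ), (0 : ℂ), (0 : ℂ), (1 : ℂ)) : ℂ × ℂ × ℂ × ℂ)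
          h01)) :=
      (cont_mk.tendsto _).comp hsub
    refine hmain.congr' ?_
    filter_upwards [eventually_gt_atTop (0 : ℝ)] with t ht
    have ht0 : (t : ℂ) ≠ 0 := by exact_mod_cast ht.ne'
    refine ((Projectivization.mk_eq_mk_iff ℂ _ _ _ _).mpr
      ⟨Units.mk0 ((t : ℂ) * s.2) (mul_ne_zero ht0 h2), ?_⟩).symm
    simp only [Units.smul_def, Units.val_mk0, Prod.smul_mk, smul_eq_mul, Prod.mk.injEq, hu_def]
    refine ⟨by field_simp [h2, ht0], by simp [h1], by simp [h1], by simp [h1]⟩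
  · -- s₁ ≠ 0
    set u : ℝ → ℂ × ℂ × ℂ × ℂ :=
      fun t => ((6 / s.1 ^ 3) / (t : ℂ) ^ 3, (6 / s.1 ^ 2) / (t : ℂ) ^ 2,
        (3 / s.1) / (t : ℂ), 1 + (6 * s.2 / s.1 ^ 3) / (t : ℂ) ^ 2) with hu_def
    have hu : ∀ t, u t ≠ 0 := by
      intro t h
      rcases eq_or_ne t 0 with rfl | ht
      · simp [hu_def, Prod.ext_iff] at h
      · have ht0 : (t : ℂ) ≠ 0 := by exact_mod_cast ht
        simp [hu_def, Prod.ext_iff, div_eq_zero_iff, pow_eq_zero_iff, ht0, h1] at h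
    have htend : Tendsto u atTop (nhds ((0 : ℂ), (0 : ℂ), (0 : ℂ), (1 : ℂ))) := by
      refine Tendsto.prodMk_nhds (aux_tendsto_cdiv _ 3 (by norm_num))
        (Tendsto.prodMk_nhds (aux_tendsto_cdiv _ 2 (by norm_num))
        (Tendsto.prodMk_nhds (by simpa using aux_tendsto_cdiv (3 / s.1) 1 le_rfl) ?_))
      have := (aux_tendsto_cdiv (6 * s.2 / s.1 ^ 3) 2 (by norm_num)).const_add (1 : ℂ)
      simpa using this
    have hsub : Tendsto (fun t => (⟨u t, hu t⟩ : {v : ℂ × ℂ × ℂ × ℂ // v ≠ 0}))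
        atTop (nhds ⟨((0 : ℂ), (0 : ℂ), (0 : ℂ), (1 : ℂ)), h01⟩) :=
      tendsto_subtype_rng.mpr htend
    have hmain : Tendsto (fun t => Projectivization.mk ℂ (u t) (hu t)) atTop
        (nhds (Projectivization.mk ℂ (((0 : ℂ), (0 : ℂ), (0 : ℂ), (1 : ℂ)) : ℂ × ℂ × ℂ × ℂ)
          h01)) :=
      (cont_mk.tendsto _).comp hsub
    refine hmain.congr' ?_
    filter_upwards [eventually_gt_atTop (0 : ℝ)] with t ht
    have ht0 : (t : ℂ) ≠ 0 := by exact_mod_cast ht.ne'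
    refine ((Projectivization.mk_eq_mk_iff ℂ _ _ _ _).mpr
      ⟨Units.mk0 ((t : ℂ) ^ 3 * s.1 ^ 3 / 6)
        (div_ne_zero (mul_ne_zero (pow_ne_zero _ ht0) (pow_ne_zero _ h1)) (by norm_num)),
        ?_⟩).symm
    simp only [Units.smul_def, Units.val_mk0, Prod.smul_mk, smul_eq_mul, Prod.mk.injEq, hu_def]
    refine ⟨by field_simp [h1, ht0], by field_simp [h1, ht0],
      by field_simp [h1, ht0]; ring, by field_simp [h1, ht0]; ring⟩
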